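/- Let H = (V,E,w) be an edge-weighted hypergraph, let f_1, …, f_k ∈ ℝ^V be orthonormal in the weighted space, and let u_i ∈ ℝ^k (i ∈ V) be the spectral embedding. With ξ := max_{s ∈ [k]} D_w(f_s), the following hold: (1) Σ_{e ∈ E} w_e · max_{i,j ∈ e} ‖u_i − u_j‖² ≤ ξ · Σ_{i ∈ V} w_i ‖u_i‖²; (2) Σ_{i ∈ V} w_i ‖u_i‖² = k; (3) for every j ∈ V, Σ_{i ∈ V} w_i · ⟨u_j, u_i⟩² = ‖u_j‖²; (4) Σ_{e ∈ E} w_e · (max_{i ∈ e} ‖u_i‖) · (max_{i,j ∈ e} ‖u_i − u_j‖) ≤ k · √ξ. -/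

import Mathlib

open Finset

/-- An edge-weighted hypergraph on a finite vertex set `V`: a finite set of hyperedges,
each a nonempty subset of `V`, with positive weights. -/
structure WeightedHypergraph (V : Type*) [Fintype V] [DecidableEq V] where
  E : Finset (Finset V)
  w : Finset V → ℝ
  edge_nonempty : ∀ e ∈ E, e.Nonempty
  w_pos : ∀ e ∈ E, 0 < w e

namespace WeightedHypergraph

variable {V : Type*} [Fintype V] [DecidableEq V]

/-- The weight of a vertex: total weight of hyperedges containing it. -/
noncomputable def wv (H : WeightedHypergraph V) (v : V) : ℝ :=
  ∑ e ∈ H.E.filter (fun e => v ∈ e), H.w e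

/-- The weight of a set of vertices. -/
noncomputable def wS (H : WeightedHypergraph V) (S : Finset V) : ℝ := ∑ v ∈ S, H.wv v

/-- The boundary of `S`: hyperedges meeting both `S` and its complement. -/
noncomputable def bdry (H : WeightedHypergraph V) (S : Finset V) : Finset (Finset V) :=
  H.E.filter (fun e => (e ∩ S).Nonempty ∧ (e \ S).Nonempty)

/-- The expansion `φ(S)` of a set of vertices. -/
noncomputable def phi (H : WeightedHypergraph V) (S : Finset V) : ℝ :=
  (∑ e ∈ H.bdry S, H.w e) / H.wS S

/-- `max_{u,v ∈ e} (f u - f v)^2`. -/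
noncomputable def edgeDisc (H : WeightedHypergraph V) (f : V → ℝ) (e : Finset V) : ℝ :=
  sSup {x : ℝ | ∃ u ∈ e, ∃ v ∈ e, (f u - f v) ^ 2 = x}

/-- The discrepancy ratio `D_w(f)`. -/
noncomputable def disc (H : WeightedHypergraph V) (f : V → ℝ) : ℝ :=
  (∑ e ∈ H.E, H.w e * H.edgeDisc f e) / ∑ u : V, H.wv u * f u ^ 2

/-- The weighted inner product `⟨f,g⟩_w`. -/
noncomputable def wip (H : WeightedHypergraph V) (f g : V → ℝ) : ℝ :=
  ∑ u : V, H.wv u * f u * g u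

/-- `γ₂`: infimum of the discrepancy ratio over nonzero `f ⊥_w 1`. -/
noncomputable def gamma2 (H : WeightedHypergraph V) : ℝ :=
  sInf {x : ℝ | ∃ f : V → ℝ, f ≠ 0 ∧ H.wip f (fun _ => 1) = 0 ∧ H.disc f = x}

/-- The hypergraph expansion `φ_H`. -/
noncomputable def phiH (H : WeightedHypergraph V) : ℝ :=
  sInf {x : ℝ | ∃ S : Finset V, S.Nonempty ∧ S ≠ univ ∧
    x = max (H.phi S) (H.phi Sᶜ)}

/-- `ζ_k`: inf over `k`-tuples of nonzero pairwise `w`-orthogonal vectors of the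
sup of the discrepancy ratio over nonzero vectors in their span. -/
noncomputable def zeta (H : WeightedHypergraph V) (k : ℕ) : ℝ :=
  sInf {x : ℝ | ∃ f : Fin k → V → ℝ, (∀ i, f i ≠ 0) ∧
    (∀ i j, i ≠ j → H.wip (f i) (f j) = 0) ∧
    x = sSup {y : ℝ | ∃ h : V → ℝ, h ≠ 0 ∧
      h ∈ Submodule.span ℝ (Set.range f) ∧ H.disc h = y}}

/-- `ξ_k`: inf over `k`-tuples of nonzero pairwise `w`-orthogonal vectors of the
maximum discrepancy ratio among them. -/
noncomputable def xi (H : WeightedHypergraph V) (k : ℕ) : ℝ :=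
  sInf {x : ℝ | ∃ f : Fin k → V → ℝ, (∀ i, f i ≠ 0) ∧
    (∀ i j, i ≠ j → H.wip (f i) (f j) = 0) ∧
    x = sSup {y : ℝ | ∃ i, H.disc (f i) = y}}

/-- A sequence of procedural minimizers: `f 0` is a nonzero constant vector, each `f i`
is nonzero and `w`-orthogonal to the previous ones, and attains the infimum of the
discrepancy ratio over nonzero vectors `w`-orthogonal to the previous ones. -/
def IsProcMin (H : WeightedHypergraph V) {k : ℕ} (f : Fin k → V → ℝ) : Prop :=
  (∀ i, f i ≠ 0) ∧
  (∀ i : Fin k, (i : ℕ) = 0 → ∃ c : ℝ, f i = fun _ => c) ∧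
  (∀ i j : Fin k, (j : ℕ) < (i : ℕ) → H.wip (f i) (f j) = 0) ∧
  (∀ i : Fin k, 0 < (i : ℕ) → H.disc (f i) =
    sInf {x : ℝ | ∃ g : V → ℝ, g ≠ 0 ∧
      (∀ j : Fin k, (j : ℕ) < (i : ℕ) → H.wip g (f j) = 0) ∧ H.disc g = x})

end WeightedHypergraph


section Aux

variable {V : Type*} [Fintype V] [DecidableEq V]

lemma bdd2 (e : Finset V) (F : V → V → ℝ) :
    BddAbove {y : ℝ | ∃ i ∈ e, ∃ j ∈ e, F i j = y} := by
  have h : {y : ℝ | ∃ i ∈ e, ∃ j ∈ e, F i j = y} = Set.image2 F ↑e ↑e := by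
    ext y; simp [Set.mem_image2]
  rw [h]
  exact (Set.Finite.image2 F e.finite_toSet e.finite_toSet).bddAbove

lemma bdd1 (e : Finset V) (F : V → ℝ) :
    BddAbove {y : ℝ | ∃ i ∈ e, F i = y} := by
  have h : {y : ℝ | ∃ i ∈ e, F i = y} = F '' ↑e := by
    ext y; simp [Set.mem_image]
  rw [h]
  exact (e.finite_toSet.image F).bddAbove

lemma double_count (H : WeightedHypergraph V) (g : V → ℝ) :
    ∑ e ∈ H.E, ∑ i ∈ e, H.w e * g i = ∑ i : V, H.wv i * g i := by
  calc ∑ e ∈ H.E, ∑ i ∈ e, H.w e * g i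
      = ∑ e ∈ H.E, ∑ i : V, if i ∈ e then H.w e * g i else 0 := by
        apply Finset.sum_congr rfl; intro e _
        rw [Finset.sum_ite_mem, Finset.univ_inter]
    _ = ∑ i : V, ∑ e ∈ H.E, if i ∈ e then H.w e * g i else 0 := Finset.sum_comm
    _ = ∑ i : V, H.wv i * g i := by
        apply Finset.sum_congr rfl; intro i _
        unfold WeightedHypergraph.wv
        rw [Finset.sum_filter, Finset.sum_mul]
        apply Finset.sum_congr rfl; intro e _
        split <;> simp

end Aux

/-- Properties of the spectral embedding `u_i(s) := f_s(i)` of a weighted-orthonormal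
system `f_1, …, f_k`, with `ξ := max_s D_w(f_s)`:
(1) `Σ_e w_e max_{i,j∈e} ‖u_i − u_j‖² ≤ ξ Σ_i w_i ‖u_i‖²`;
(2) `Σ_i w_i ‖u_i‖² = k`;
(3) `Σ_i w_i ⟨u_j, u_i⟩² = ‖u_j‖²` for all `j`;
(4) `Σ_e w_e (max_{i∈e} ‖u_i‖)(max_{i,j∈e} ‖u_i − u_j‖) ≤ k √ξ`. -/
theorem spectral_embedding_properties {V : Type*} [Fintype V] [DecidableEq V]
    (H : WeightedHypergraph V) (hw : ∀ v : V, 0 < H.wv v)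
    (k : ℕ) (hk : 0 < k) (f : Fin k → V → ℝ)
    (horth : ∀ i j, H.wip (f i) (f j) = if i = j then 1 else 0)
    (ξ : ℝ)
    (hξ : ξ = Finset.univ.sup' (Finset.univ_nonempty_iff.mpr ⟨⟨0, hk⟩⟩)
      (fun s => H.disc (f s))) :
    (∑ e ∈ H.E, H.w e *
        sSup {y : ℝ | ∃ i ∈ e, ∃ j ∈ e, (∑ s : Fin k, (f s i - f s j) ^ 2) = y} ≤
      ξ * ∑ i : V, H.wv i * ∑ s : Fin k, f s i ^ 2) ∧
    (∑ i : V, H.wv i * ∑ s : Fin k, f s i ^ 2 = k) ∧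
    (∀ j : V, ∑ i : V, H.wv i * (∑ s : Fin k, f s j * f s i) ^ 2 =
      ∑ s : Fin k, f s j ^ 2) ∧
    (∑ e ∈ H.E, H.w e *
        (sSup {y : ℝ | ∃ i ∈ e, Real.sqrt (∑ s : Fin k, f s i ^ 2) = y} *
          sSup {y : ℝ | ∃ i ∈ e, ∃ j ∈ e,
            Real.sqrt (∑ s : Fin k, (f s i - f s j) ^ 2) = y}) ≤
      k * Real.sqrt ξ) := by
  have hwnn : ∀ e ∈ H.E, (0:ℝ) ≤ H.w e := fun e he => (H.w_pos e he).le
  -- denominator of disc equals 1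
  have hdenom : ∀ s : Fin k, ∑ u : V, H.wv u * f s u ^ 2 = 1 := by
    intro s
    have : ∑ u : V, H.wv u * f s u ^ 2 = H.wip (f s) (f s) := by
      unfold WeightedHypergraph.wip; apply Finset.sum_congr rfl; intro u _; ring
    rw [this, horth s s]; simp
  have hdisc : ∀ s : Fin k, H.disc (f s) = ∑ e ∈ H.E, H.w e * H.edgeDisc (f s) e := by
    intro s; unfold WeightedHypergraph.disc; rw [hdenom s, div_one]
  -- edgeDisc facts
  have hed_mem : ∀ s : Fin k, ∀ e ∈ H.E, ∀ i ∈ e, ∀ j ∈ e,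
      (f s i - f s j) ^ 2 ≤ H.edgeDisc (f s) e := by
    intro s e _ i hi j hj
    exact le_csSup (bdd2 e (fun i j => (f s i - f s j) ^ 2)) ⟨i, hi, j, hj, rfl⟩
  have hed_nn : ∀ s : Fin k, ∀ e ∈ H.E, (0:ℝ) ≤ H.edgeDisc (f s) e := by
    intro s e he
    obtain ⟨u, hu⟩ := H.edge_nonempty e he
    have := hed_mem s e he u hu u hu
    simpa using this
  -- numerator bounds
  have hξ' : ∀ s : Fin k, ∑ e ∈ H.E, H.w e * H.edgeDisc (f s) e ≤ ξ := by
    intro s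
    rw [hξ, ← hdisc s]
    exact Finset.le_sup' (fun s => H.disc (f s)) (Finset.mem_univ s)
  have hξnn : (0:ℝ) ≤ ξ := by
    refine le_trans ?_ (hξ' ⟨0, hk⟩)
    exact Finset.sum_nonneg fun e he => mul_nonneg (hwnn e he) (hed_nn _ e he)
  -- Part 2
  have h2 : ∑ i : V, H.wv i * ∑ s : Fin k, f s i ^ 2 = k := by
    have : ∑ i : V, H.wv i * ∑ s : Fin k, f s i ^ 2
        = ∑ s : Fin k, H.wip (f s) (f s) := by
      unfold WeightedHypergraph.wip
      simp_rw [Finset.mul_sum]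
      rw [Finset.sum_comm]
      apply Finset.sum_congr rfl; intro s _
      apply Finset.sum_congr rfl; intro i _; ring
    rw [this]
    simp [horth]
  -- Part 1 : per-edge bound
  have hM : ∀ e ∈ H.E,
      sSup {y : ℝ | ∃ i ∈ e, ∃ j ∈ e, (∑ s : Fin k, (f s i - f s j) ^ 2) = y}
        ≤ ∑ s : Fin k, H.edgeDisc (f s) e := by
    intro e he
    apply Real.sSup_le
    · rintro x ⟨i, hi, j, hj, rfl⟩
      exact Finset.sum_le_sum fun s _ => hed_mem s e he i hi j hj
    · exact Finset.sum_nonneg fun s _ => hed_nn s e he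
  have hMnn : ∀ e ∈ H.E, (0:ℝ) ≤
      sSup {y : ℝ | ∃ i ∈ e, ∃ j ∈ e, (∑ s : Fin k, (f s i - f s j) ^ 2) = y} := by
    intro e he
    obtain ⟨u, hu⟩ := H.edge_nonempty e he
    have h0 : (0:ℝ) ∈ {y : ℝ | ∃ i ∈ e, ∃ j ∈ e, (∑ s : Fin k, (f s i - f s j) ^ 2) = y} :=
      ⟨u, hu, u, hu, by simp⟩
    exact le_csSup (bdd2 e _) h0
  have h1 : ∑ e ∈ H.E, H.w e *
      sSup {y : ℝ | ∃ i ∈ e, ∃ j ∈ e, (∑ s : Fin k, (f s i - f s j) ^ 2) = y}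
      ≤ ξ * k := by
    calc ∑ e ∈ H.E, H.w e *
        sSup {y : ℝ | ∃ i ∈ e, ∃ j ∈ e, (∑ s : Fin k, (f s i - f s j) ^ 2) = y}
        ≤ ∑ e ∈ H.E, H.w e * ∑ s : Fin k, H.edgeDisc (f s) e :=
          Finset.sum_le_sum fun e he =>
            mul_le_mul_of_nonneg_left (hM e he) (hwnn e he)
      _ = ∑ s : Fin k, ∑ e ∈ H.E, H.w e * H.edgeDisc (f s) e := by
          simp_rw [Finset.mul_sum]; rw [Finset.sum_comm]
      _ ≤ ∑ _s : Fin k, ξ := Finset.sum_le_sum fun s _ => hξ' s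
      _ = ξ * k := by simp [mul_comm]
  -- Part 3
  have h3 : ∀ j : V, ∑ i : V, H.wv i * (∑ s : Fin k, f s j * f s i) ^ 2 =
      ∑ s : Fin k, f s j ^ 2 := by
    intro j
    have expand : ∀ i : V, H.wv i * (∑ s : Fin k, f s j * f s i) ^ 2
        = ∑ s : Fin k, ∑ t : Fin k, f s j * f t j * (H.wv i * f s i * f t i) := by
      intro i
      rw [sq, Finset.sum_mul_sum, Finset.mul_sum]
      apply Finset.sum_congr rfl; intro s _
      rw [Finset.mul_sum]
      apply Finset.sum_congr rfl; intro t _; ring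
    calc ∑ i : V, H.wv i * (∑ s : Fin k, f s j * f s i) ^ 2
        = ∑ s : Fin k, ∑ t : Fin k, f s j * f t j * H.wip (f s) (f t) := by
          simp_rw [expand]
          rw [Finset.sum_comm]
          apply Finset.sum_congr rfl; intro s _
          rw [Finset.sum_comm]
          apply Finset.sum_congr rfl; intro t _
          unfold WeightedHypergraph.wip
          rw [Finset.mul_sum]
      _ = ∑ s : Fin k, f s j ^ 2 := by
          simp_rw [horth, mul_ite, mul_one, mul_zero]
          simp [Finset.sum_ite_eq, sq]
  refine ⟨?_, h2, h3, ?_⟩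
  · rw [h2]; exact h1
  -- Part 4
  · set A : Finset V → ℝ := fun e =>
      sSup {y : ℝ | ∃ i ∈ e, Real.sqrt (∑ s : Fin k, f s i ^ 2) = y} with hA
    set B : Finset V → ℝ := fun e =>
      sSup {y : ℝ | ∃ i ∈ e, ∃ j ∈ e,
        Real.sqrt (∑ s : Fin k, (f s i - f s j) ^ 2) = y} with hB
    have hAnn : ∀ e ∈ H.E, 0 ≤ A e := by
      intro e he
      obtain ⟨u, hu⟩ := H.edge_nonempty e he
      exact le_trans (Real.sqrt_nonneg _) (le_csSup (bdd1 e _) ⟨u, hu, rfl⟩)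
    have hBnn : ∀ e ∈ H.E, 0 ≤ B e := by
      intro e he
      obtain ⟨u, hu⟩ := H.edge_nonempty e he
      exact le_trans (Real.sqrt_nonneg _) (le_csSup (bdd2 e _) ⟨u, hu, u, hu, rfl⟩)
    -- bound on ∑ w e * A e ^ 2
    have hA2 : ∀ e ∈ H.E, A e ^ 2 ≤ ∑ i ∈ e, ∑ s : Fin k, f s i ^ 2 := by
      intro e he
      have hSnn : (0:ℝ) ≤ ∑ i ∈ e, ∑ s : Fin k, f s i ^ 2 :=
        Finset.sum_nonneg fun i _ => Finset.sum_nonneg fun s _ => sq_nonneg _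
      have hAle : A e ≤ Real.sqrt (∑ i ∈ e, ∑ s : Fin k, f s i ^ 2) := by
        apply Real.sSup_le
        · rintro x ⟨i, hi, rfl⟩
          exact Real.sqrt_le_sqrt (Finset.single_le_sum
            (fun i _ => Finset.sum_nonneg fun s _ => sq_nonneg (f s i)) hi)
        · exact Real.sqrt_nonneg _
      calc A e ^ 2 ≤ Real.sqrt (∑ i ∈ e, ∑ s : Fin k, f s i ^ 2) ^ 2 :=
            pow_le_pow_left₀ (hAnn e he) hAle 2
        _ = ∑ i ∈ e, ∑ s : Fin k, f s i ^ 2 := Real.sq_sqrt hSnn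
    have hsumA : ∑ e ∈ H.E, H.w e * A e ^ 2 ≤ k := by
      calc ∑ e ∈ H.E, H.w e * A e ^ 2
          ≤ ∑ e ∈ H.E, H.w e * ∑ i ∈ e, ∑ s : Fin k, f s i ^ 2 :=
            Finset.sum_le_sum fun e he =>
              mul_le_mul_of_nonneg_left (hA2 e he) (hwnn e he)
        _ = ∑ i : V, H.wv i * ∑ s : Fin k, f s i ^ 2 := by
            rw [← double_count H (fun i => ∑ s : Fin k, f s i ^ 2)]
            apply Finset.sum_congr rfl; intro e _
            rw [Finset.mul_sum]
        _ = k := h2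
    have hB2 : ∀ e ∈ H.E, B e ^ 2 ≤
        sSup {y : ℝ | ∃ i ∈ e, ∃ j ∈ e, (∑ s : Fin k, (f s i - f s j) ^ 2) = y} := by
      intro e he
      set M := sSup {y : ℝ | ∃ i ∈ e, ∃ j ∈ e, (∑ s : Fin k, (f s i - f s j) ^ 2) = y}
      have hBle : B e ≤ Real.sqrt M := by
        apply Real.sSup_le
        · rintro x ⟨i, hi, j, hj, rfl⟩
          exact Real.sqrt_le_sqrt (le_csSup (bdd2 e _) ⟨i, hi, j, hj, rfl⟩)
        · exact Real.sqrt_nonneg _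
      calc B e ^ 2 ≤ Real.sqrt M ^ 2 := pow_le_pow_left₀ (hBnn e he) hBle 2
        _ = M := Real.sq_sqrt (hMnn e he)
    have hsumB : ∑ e ∈ H.E, H.w e * B e ^ 2 ≤ ξ * k := by
      refine le_trans (Finset.sum_le_sum fun e he =>
        mul_le_mul_of_nonneg_left (hB2 e he) (hwnn e he)) h1
    have key := Finset.sum_mul_sq_le_sq_mul_sq H.E
      (fun e => Real.sqrt (H.w e) * A e) (fun e => Real.sqrt (H.w e) * B e)
    have e0 : ∑ e ∈ H.E, (Real.sqrt (H.w e) * A e) * (Real.sqrt (H.w e) * B e)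
        = ∑ e ∈ H.E, H.w e * (A e * B e) := by
      apply Finset.sum_congr rfl; intro e he
      have : Real.sqrt (H.w e) * Real.sqrt (H.w e) = H.w e :=
        Real.mul_self_sqrt (hwnn e he)
      calc (Real.sqrt (H.w e) * A e) * (Real.sqrt (H.w e) * B e)
          = (Real.sqrt (H.w e) * Real.sqrt (H.w e)) * (A e * B e) := by ring
        _ = H.w e * (A e * B e) := by rw [this]
    have eA : ∑ e ∈ H.E, (Real.sqrt (H.w e) * A e) ^ 2 = ∑ e ∈ H.E, H.w e * A e ^ 2 := by
      apply Finset.sum_congr rfl; intro e he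
      rw [mul_pow, Real.sq_sqrt (hwnn e he)]
    have eB : ∑ e ∈ H.E, (Real.sqrt (H.w e) * B e) ^ 2 = ∑ e ∈ H.E, H.w e * B e ^ 2 := by
      apply Finset.sum_congr rfl; intro e he
      rw [mul_pow, Real.sq_sqrt (hwnn e he)]
    rw [e0, eA, eB] at key
    have hBsq_nn : (0:ℝ) ≤ ∑ e ∈ H.E, H.w e * B e ^ 2 :=
      Finset.sum_nonneg fun e he => mul_nonneg (hwnn e he) (sq_nonneg _)
    have hsq : (∑ e ∈ H.E, H.w e * (A e * B e)) ^ 2 ≤ (k:ℝ) * (ξ * k) :=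
      le_trans key (mul_le_mul hsumA hsumB hBsq_nn (Nat.cast_nonneg k))
    have hnn : (0:ℝ) ≤ ∑ e ∈ H.E, H.w e * (A e * B e) :=
      Finset.sum_nonneg fun e he =>
        mul_nonneg (hwnn e he) (mul_nonneg (hAnn e he) (hBnn e he))
    calc ∑ e ∈ H.E, H.w e * (A e * B e)
        = Real.sqrt ((∑ e ∈ H.E, H.w e * (A e * B e)) ^ 2) := (Real.sqrt_sq hnn).symm
      _ ≤ Real.sqrt ((k:ℝ) * (ξ * k)) := Real.sqrt_le_sqrt hsq
      _ = k * Real.sqrt ξ := by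
          rw [show (k:ℝ) * (ξ * k) = (k:ℝ)^2 * ξ by ring,
            Real.sqrt_mul (sq_nonneg _), Real.sqrt_sq (Nat.cast_nonneg k)]
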